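/- (Non-associativity of Møller addition.) In E = EuclideanSpace ℝ (Fin 2) there exist vectors a, b, c with ‖a‖ < 1, ‖b‖ < 1, ‖c‖ < 1 such that (a ⊕ b) ⊕ c ≠ a ⊕ (b ⊕ c), where ⊕ is the Møller addition of velocities. -/

import Mathlib

open RealInnerProductSpace

/-- The Møller addition of velocities; `δ = √(1 - ‖v‖²)`. -/
noncomputable def moller (v u : EuclideanSpace ℝ (Fin 2)) : EuclideanSpace ℝ (Fin 2) :=
  (1 + ⟪v, u⟫)⁻¹ •
    ((1 + ⟪v, u⟫ / (1 + Real.sqrt (1 - ‖v‖ ^ 2))) • v + Real.sqrt (1 - ‖v‖ ^ 2) • u)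

/-- Explicit vector in `EuclideanSpace ℝ (Fin 2)`. -/
noncomputable def ee (x y : ℝ) : EuclideanSpace ℝ (Fin 2) := (WithLp.equiv 2 _).symm ![x, y]

@[simp] lemma ee_zero (x y : ℝ) : ee x y 0 = x := rfl
@[simp] lemma ee_one (x y : ℝ) : ee x y 1 = y := rfl

lemma norm_ee (x y : ℝ) : ‖ee x y‖ = Real.sqrt (x ^ 2 + y ^ 2) := by
  simp [ee, EuclideanSpace.norm_eq, Fin.sum_univ_two, sq_abs]

lemma norm_sq_ee (x y : ℝ) : ‖ee x y‖ ^ 2 = x ^ 2 + y ^ 2 := by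
  rw [norm_ee, Real.sq_sqrt (by positivity)]

lemma inner_ee (x y z w : ℝ) : ⟪ee x y, ee z w⟫ = x * z + y * w := by
  simp [ee, PiLp.inner_apply, Fin.sum_univ_two]; ring

lemma moller_ee (x y z w : ℝ) :
    moller (ee x y) (ee z w) =
      ee ((1 + (x * z + y * w))⁻¹ *
            ((1 + (x * z + y * w) / (1 + Real.sqrt (1 - (x ^ 2 + y ^ 2)))) * x
              + Real.sqrt (1 - (x ^ 2 + y ^ 2)) * z))
         ((1 + (x * z + y * w))⁻¹ *
            ((1 + (x * z + y * w) / (1 + Real.sqrt (1 - (x ^ 2 + y ^ 2)))) * y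
              + Real.sqrt (1 - (x ^ 2 + y ^ 2)) * w)) := by
  unfold moller
  rw [inner_ee, norm_sq_ee]
  ext i
  fin_cases i <;> simp [PiLp.smul_apply, PiLp.add_apply, smul_eq_mul] <;> ring

lemma sqrt1 : Real.sqrt (1 - (((3:ℝ)/5) ^ 2 + (0:ℝ) ^ 2)) = 4/5 := by
  rw [show (1 - (((3:ℝ)/5) ^ 2 + (0:ℝ) ^ 2)) = (4/5)^2 by norm_num,
    Real.sqrt_sq (by norm_num)]

lemma sqrt2 : Real.sqrt (1 - (((0:ℝ)) ^ 2 + ((3:ℝ)/5) ^ 2)) = 4/5 := by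
  rw [show (1 - (((0:ℝ)) ^ 2 + ((3:ℝ)/5) ^ 2)) = (4/5)^2 by norm_num,
    Real.sqrt_sq (by norm_num)]

lemma sqrt3 : Real.sqrt (1 - (((3:ℝ)/5) ^ 2 + ((12:ℝ)/25) ^ 2)) = 16/25 := by
  rw [show (1 - (((3:ℝ)/5) ^ 2 + ((12:ℝ)/25) ^ 2)) = (16/25)^2 by norm_num,
    Real.sqrt_sq (by norm_num)]

lemma ee_congr {x y x' y' : ℝ} (hx : x = x') (hy : y = y') : ee x y = ee x' y' := by
  rw [hx, hy]

/-- Non-associativity of the Møller addition. -/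
theorem moller_not_associative :
    ∃ a b c : EuclideanSpace ℝ (Fin 2), ‖a‖ < 1 ∧ ‖b‖ < 1 ∧ ‖c‖ < 1 ∧
      moller (moller a b) c ≠ moller a (moller b c) := by
  refine ⟨ee (3/5) 0, ee 0 (3/5), ee (3/5) 0, ?_, ?_, ?_, ?_⟩
  · rw [norm_ee, show ((3:ℝ)/5) ^ 2 + (0:ℝ) ^ 2 = (3/5)^2 by norm_num,
      Real.sqrt_sq (by norm_num)]; norm_num
  · rw [norm_ee, show ((0:ℝ)) ^ 2 + ((3:ℝ)/5) ^ 2 = (3/5)^2 by norm_num,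
      Real.sqrt_sq (by norm_num)]; norm_num
  · rw [norm_ee, show ((3:ℝ)/5) ^ 2 + (0:ℝ) ^ 2 = (3/5)^2 by norm_num,
      Real.sqrt_sq (by norm_num)]; norm_num
  · have h1 : moller (ee (3/5) 0) (ee 0 (3/5)) = ee (3/5) (12/25) := by
      rw [moller_ee, sqrt1]; exact ee_congr (by norm_num) (by norm_num)
    have h2 : moller (ee (3/5) (12/25)) (ee (3/5) 0) = ee (2859/3485) (300/697) := by
      rw [moller_ee, sqrt3]; exact ee_congr (by norm_num) (by norm_num)
    have h3 : moller (ee 0 (3/5)) (ee (3/5) 0) = ee (12/25) (3/5) := by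
      rw [moller_ee, sqrt2]; exact ee_congr (by norm_num) (by norm_num)
    have h4 : moller (ee (3/5) 0) (ee (12/25) (3/5)) = ee (135/161) (60/161) := by
      rw [moller_ee, sqrt1]; exact ee_congr (by norm_num) (by norm_num)
    rw [h1, h2, h3, h4]
    intro h
    have := congrArg (fun v : EuclideanSpace ℝ (Fin 2) => v 1) h
    simp only [ee_one] at this
    norm_num at this
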